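/- Let N ≥ 1 and let β ∈ ℕ^N be a multi-index with |β| = k. Define the polynomial function p_β : ℝ^N → ℝ by p_β(y) = Σ_{j=0}^{⌊k/4⌋} (1/j!) · (Δ²)^j (y^β), where y^β = y₁^{β₁}···y_N^{β_N} and (Δ²)^j is the j-th iterate of the bi-Laplacian. Then p_β satisfies −Δ²p_β(y) − (1/4)·(y·∇p_β(y)) = −(k/4)·p_β(y) for every y ∈ ℝ^N; that is, p_β is an eigenfunction of the adjoint operator 𝐁* = −Δ² − (1/4) y·∇ with eigenvalue −k/4. -/

import Mathlib

open MeasureTheory Real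

/-- Partial derivative ∂/∂yᵢ of a scalar function on ℝ^N. -/
noncomputable def pd {N : ℕ} (i : Fin N) (f : (Fin N → ℝ) → ℝ) : (Fin N → ℝ) → ℝ :=
  fun y => fderiv ℝ f y (Pi.single i 1)

/-- Laplacian Δf = Σᵢ ∂²f/∂yᵢ². -/
noncomputable def lap {N : ℕ} (f : (Fin N → ℝ) → ℝ) : (Fin N → ℝ) → ℝ :=
  fun y => ∑ i, pd i (pd i f) y

/-- Bi-Laplacian Δ²f. -/
noncomputable def biLap {N : ℕ} (f : (Fin N → ℝ) → ℝ) : (Fin N → ℝ) → ℝ :=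
  lap (lap f)

/-- The monomial y^β = y₁^{β₁} ⋯ y_N^{β_N}. -/
def monomial {N : ℕ} (β : Fin N → ℕ) : (Fin N → ℝ) → ℝ :=
  fun y => ∏ i, (y i) ^ (β i)

section Aux

open MvPolynomial

variable {N : ℕ}

/-- Polynomial-level Laplacian. -/
noncomputable def lapP (q : MvPolynomial (Fin N) ℝ) : MvPolynomial (Fin N) ℝ :=
  ∑ i, pderiv i (pderiv i q)

/-- Polynomial-level bi-Laplacian. -/
noncomputable def biLapP (q : MvPolynomial (Fin N) ℝ) : MvPolynomial (Fin N) ℝ :=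
  lapP (lapP q)

/-- Candidate Fréchet derivative of polynomial evaluation. -/
noncomputable def evalFD (q : MvPolynomial (Fin N) ℝ) (y : Fin N → ℝ) : (Fin N → ℝ) →L[ℝ] ℝ :=
  ∑ i, MvPolynomial.eval y (pderiv i q) • ContinuousLinearMap.proj i

lemma hasFDerivAt_eval (q : MvPolynomial (Fin N) ℝ) (y : Fin N → ℝ) :
    HasFDerivAt (fun z => MvPolynomial.eval z q) (evalFD q y) y := by
  induction q using MvPolynomial.induction_on with
  | C a =>
      have : evalFD (C a : MvPolynomial (Fin N) ℝ) y = 0 := by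
        simp [evalFD, pderiv_C]
      rw [this]
      simpa using hasFDerivAt_const a y
  | add p q hp hq =>
      have : evalFD (p + q) y = evalFD p y + evalFD q y := by
        simp [evalFD, add_smul, Finset.sum_add_distrib]
      rw [this]
      exact (hp.add hq).congr_of_eventuallyEq (by filter_upwards with z; simp)
  | mul_X p n hp =>
      have h2 : HasFDerivAt (fun z : Fin N → ℝ => z n)
          (ContinuousLinearMap.proj n : (Fin N → ℝ) →L[ℝ] ℝ) y :=
        hasFDerivAt_apply n y
      have hmul := hp.mul h2
      have heq : evalFD (p * X n) y =
          MvPolynomial.eval y p • ContinuousLinearMap.proj n + (y n) • evalFD p y := by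
        classical
        ext v
        simp only [evalFD, ContinuousLinearMap.sum_apply, ContinuousLinearMap.smul_apply,
          ContinuousLinearMap.add_apply, ContinuousLinearMap.proj_apply, smul_eq_mul,
          Finset.mul_sum, pderiv_mul, map_add, map_mul, eval_X, add_mul,
          Finset.sum_add_distrib]
        rw [add_comm ((MvPolynomial.eval y) p * v n)]
        congr 1
        · exact Finset.sum_congr rfl fun i _ => by ring
        · rw [Finset.sum_eq_single n]
          · simp
          · intro b _ hb; simp [pderiv_X_of_ne (Ne.symm hb)]
          · simp
      rw [heq]
      exact hmul.congr_of_eventuallyEq (by filter_upwards with z; simp)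

lemma pd_eval (q : MvPolynomial (Fin N) ℝ) (i : Fin N) :
    pd i (fun z => MvPolynomial.eval z q) = fun y => MvPolynomial.eval y (pderiv i q) := by
  funext y
  have h := (hasFDerivAt_eval q y).fderiv
  classical
  simp only [pd, h, evalFD, ContinuousLinearMap.sum_apply, ContinuousLinearMap.smul_apply,
    ContinuousLinearMap.proj_apply, smul_eq_mul]
  rw [Finset.sum_eq_single i]
  · simp
  · intro b _ hb; simp [Pi.single_eq_of_ne hb]
  · simp

lemma lap_eval (q : MvPolynomial (Fin N) ℝ) :
    lap (fun z => MvPolynomial.eval z q) = fun y => MvPolynomial.eval y (lapP q) := by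
  funext y
  simp only [lap, lapP, map_sum]
  refine Finset.sum_congr rfl fun i _ => ?_
  rw [pd_eval q i, pd_eval (pderiv i q) i]

lemma biLap_eval (q : MvPolynomial (Fin N) ℝ) :
    biLap (fun z => MvPolynomial.eval z q) = fun y => MvPolynomial.eval y (biLapP q) := by
  rw [biLap, lap_eval, lap_eval]; rfl

lemma biLap_iter_eval (q : MvPolynomial (Fin N) ℝ) (j : ℕ) :
    biLap^[j] (fun z => MvPolynomial.eval z q)
      = fun y => MvPolynomial.eval y (biLapP^[j] q) := by
  induction j with
  | zero => rfl
  | succ j ih =>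
      rw [Function.iterate_succ_apply', Function.iterate_succ_apply', ih, biLap_eval]

lemma monomial_eval (β : Fin N → ℕ) :
    _root_.monomial β = fun y => MvPolynomial.eval y (∏ i, (X i : MvPolynomial (Fin N) ℝ) ^ β i) := by
  funext y
  simp [_root_.monomial]

lemma euler_term (d : Fin N →₀ ℕ) (r : ℝ) (i : Fin N) :
    X i * pderiv i (MvPolynomial.monomial d r) = (d i) • MvPolynomial.monomial d r := by
  classical
  rw [pderiv_monomial]
  rcases Nat.eq_zero_or_pos (d i) with h | h
  · simp [h]
  · have hd : Finsupp.single i 1 + (d - Finsupp.single i 1) = d := by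
      ext j
      rcases eq_or_ne j i with rfl | hj
      · simp [Finsupp.single_apply]; omega
      · simp [Finsupp.single_apply, Ne.symm hj]
    rw [X, monomial_mul, hd, smul_monomial]
    congr 1
    push_cast
    ring

lemma euler_monomial (d : Fin N →₀ ℕ) (r : ℝ) :
    ∑ i, X i * pderiv i (MvPolynomial.monomial d r) =
      (d.degree) • MvPolynomial.monomial d r := by
  classical
  simp_rw [euler_term]
  rw [← Finset.sum_smul]
  congr 1
  rw [Finsupp.degree]
  exact (Finset.sum_subset (Finset.subset_univ _) (by
    intro x _ hx
    simpa using Finsupp.notMem_support_iff.mp hx)).symm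

lemma euler (q : MvPolynomial (Fin N) ℝ) (n : ℕ) (hq : q.IsHomogeneous n) :
    ∑ i, X i * pderiv i q = n • q := by
  classical
  conv_lhs => rw [q.as_sum]
  conv_rhs => rw [q.as_sum]
  simp_rw [map_sum, Finset.mul_sum]
  rw [Finset.sum_comm, Finset.smul_sum]
  refine Finset.sum_congr rfl fun d hd => ?_
  rw [euler_monomial]
  congr 1
  rw [Finsupp.degree_eq_weight_one]
  exact hq (MvPolynomial.mem_support_iff.mp hd)

lemma pderiv_isHomogeneous {q : MvPolynomial (Fin N) ℝ} {n : ℕ} (hq : q.IsHomogeneous n)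
    (i : Fin N) : (pderiv i q).IsHomogeneous (n - 1) := by
  classical
  conv => rw [q.as_sum]
  rw [map_sum]
  apply MvPolynomial.IsHomogeneous.sum
  intro d hd
  rw [pderiv_monomial]
  rcases Nat.eq_zero_or_pos (d i) with h | h
  · simp only [h, Nat.cast_zero, mul_zero]
    rw [MvPolynomial.monomial_zero]
    exact MvPolynomial.isHomogeneous_zero _ _ _
  · apply MvPolynomial.isHomogeneous_monomial
    have hdeg : Finsupp.weight 1 d = n := hq (MvPolynomial.mem_support_iff.mp hd)
    have hsplit : d = Finsupp.single i 1 + (d - Finsupp.single i 1) := by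
      ext j
      rcases eq_or_ne j i with rfl | hj
      · simp [Finsupp.single_apply]; omega
      · simp [Finsupp.single_apply, Ne.symm hj]
    have h2 := congrArg (Finsupp.weight (1 : Fin N → ℕ)) hsplit
    rw [map_add] at h2
    have hsing : Finsupp.weight (1 : Fin N → ℕ) (Finsupp.single i 1) = 1 := by
      simp [Finsupp.weight_apply, Finsupp.sum_single_index]
    rw [Finsupp.degree_eq_weight_one]
    show Finsupp.weight (1 : Fin N → ℕ) _ = _
    omega

lemma pderiv_of_deg_zero {q : MvPolynomial (Fin N) ℝ} (hq : q.IsHomogeneous 0) (i : Fin N) :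
    pderiv i q = 0 := by
  classical
  conv_lhs => rw [q.as_sum]
  rw [map_sum]
  apply Finset.sum_eq_zero
  intro d hd
  have hdeg : Finsupp.weight 1 d = 0 := hq (MvPolynomial.mem_support_iff.mp hd)
  have hd0 : d = 0 := by
    rw [← Finsupp.degree_eq_zero_iff, Finsupp.degree_eq_weight_one]
    exact hdeg
  simp [hd0]

lemma lapP_isHomogeneous {q : MvPolynomial (Fin N) ℝ} {n : ℕ} (hq : q.IsHomogeneous n) :
    (lapP q).IsHomogeneous (n - 2) := by
  rw [← MvPolynomial.mem_homogeneousSubmodule]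
  apply Submodule.sum_mem
  intro i _
  rw [MvPolynomial.mem_homogeneousSubmodule]
  have := pderiv_isHomogeneous (pderiv_isHomogeneous hq i) i
  rwa [Nat.sub_sub] at this

lemma biLapP_isHomogeneous {q : MvPolynomial (Fin N) ℝ} {n : ℕ} (hq : q.IsHomogeneous n) :
    (biLapP q).IsHomogeneous (n - 4) := by
  have := lapP_isHomogeneous (lapP_isHomogeneous hq)
  rwa [Nat.sub_sub] at this

lemma biLapP_eq_zero {q : MvPolynomial (Fin N) ℝ} {n : ℕ} (hq : q.IsHomogeneous n)
    (hn : n ≤ 3) : biLapP q = 0 := by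
  have h1 : (lapP q).IsHomogeneous (n - 2) := lapP_isHomogeneous hq
  rw [biLapP, lapP]
  apply Finset.sum_eq_zero
  intro i _
  have h2 : (pderiv i (lapP q)).IsHomogeneous 0 := by
    have := pderiv_isHomogeneous h1 i
    have h30 : n - 2 - 1 = 0 := by omega
    rwa [h30] at this
  rw [pderiv_of_deg_zero h2 i]

lemma lapP_C_mul (c : ℝ) (q : MvPolynomial (Fin N) ℝ) :
    lapP (C c * q) = C c * lapP q := by
  rw [lapP, lapP, Finset.mul_sum]
  exact Finset.sum_congr rfl fun i _ => by rw [pderiv_C_mul, pderiv_C_mul]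

lemma biLapP_C_mul (c : ℝ) (q : MvPolynomial (Fin N) ℝ) :
    biLapP (C c * q) = C c * biLapP q := by
  rw [biLapP, lapP_C_mul, lapP_C_mul]; rfl

lemma lapP_sum {α : Type*} (s : Finset α) (f : α → MvPolynomial (Fin N) ℝ) :
    lapP (∑ j ∈ s, f j) = ∑ j ∈ s, lapP (f j) := by
  simp only [lapP, map_sum]
  exact Finset.sum_comm

lemma biLapP_sum {α : Type*} (s : Finset α) (f : α → MvPolynomial (Fin N) ℝ) :
    biLapP (∑ j ∈ s, f j) = ∑ j ∈ s, biLapP (f j) := by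
  rw [biLapP, lapP_sum, lapP_sum]; rfl

lemma sum_shift (M : ℕ) (a : ℕ → ℝ) (hM : a (M + 1) = 0) :
    ∑ j ∈ Finset.range (M + 1), (1 / (Nat.factorial j : ℝ)) * a (j + 1)
      = ∑ j ∈ Finset.range (M + 1), ((j : ℝ) / (Nat.factorial j : ℝ)) * a j := by
  have key : ∀ n : ℕ, ∑ j ∈ Finset.range n, (1 / (Nat.factorial j : ℝ)) * a (j + 1)
      = ∑ j ∈ Finset.range (n + 1), ((j : ℝ) / (Nat.factorial j : ℝ)) * a j := by
    intro n
    rw [Finset.sum_range_succ' (fun j => ((j : ℝ) / (Nat.factorial j : ℝ)) * a j)]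
    simp only [Nat.cast_zero, zero_div, zero_mul, add_zero]
    refine Finset.sum_congr rfl fun j _ => ?_
    congr 1
    rw [Nat.factorial_succ]
    push_cast
    rw [div_eq_div_iff (by positivity) (by positivity)]
    ring
  rw [key, Finset.sum_range_succ, hM, mul_zero, add_zero]

end Aux

/-- The generalized Hermite polynomial p_β(y) = Σ_{j=0}^{⌊k/4⌋} (1/j!) (Δ²)^j (y^β),
where k = |β|, is an eigenfunction of the adjoint operator 𝐁* = −Δ² − (1/4) y·∇ with
eigenvalue −k/4. -/
theorem generalized_hermite_polynomial_adjoint_eigenfunction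
    (N : ℕ) (hN : 1 ≤ N) (β : Fin N → ℕ) (k : ℕ) (hk : ∑ i, β i = k)
    (p : (Fin N → ℝ) → ℝ)
    (hp : p = fun y => ∑ j ∈ Finset.range (k / 4 + 1),
      (1 / (Nat.factorial j : ℝ)) * (biLap^[j] (monomial β)) y) :
    ∀ y : Fin N → ℝ,
      -biLap p y - (1/4) * (∑ i, y i * pd i p y) = -((k : ℝ)/4) * p y := by
  classical
  intro y
  set M := k / 4 with hM
  -- the base polynomial and its bi-Laplacian iterates
  set m0 : MvPolynomial (Fin N) ℝ := ∏ i, (MvPolynomial.X i) ^ β i with hm0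
  set q : ℕ → MvPolynomial (Fin N) ℝ := fun j => biLapP^[j] m0 with hq
  have hm0hom : m0.IsHomogeneous k := by
    rw [hm0, ← hk]
    exact MvPolynomial.IsHomogeneous.prod Finset.univ _ _
      (fun i _ => by simpa using (MvPolynomial.isHomogeneous_X ℝ i).pow (β i))
  have hq1 : ∀ j, q (j + 1) = biLapP (q j) := fun j => by
    simp only [hq]; exact Function.iterate_succ_apply' _ _ _
  have hqhom : ∀ j, (q j).IsHomogeneous (k - 4 * j) := by
    intro j
    induction j with
    | zero => simpa [hq] using hm0hom
    | succ j ih =>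
        have h2 := biLapP_isHomogeneous ih
        rw [hq1]
        have he : k - 4 * j - 4 = k - 4 * (j + 1) := by omega
        rwa [he] at h2
  -- p is the evaluation of the polynomial P
  set P : MvPolynomial (Fin N) ℝ :=
    ∑ j ∈ Finset.range (M + 1), MvPolynomial.C (1 / (Nat.factorial j : ℝ)) * q j with hP
  have hpP : p = fun z => MvPolynomial.eval z P := by
    rw [hp]
    funext z
    rw [hP, map_sum]
    refine Finset.sum_congr rfl fun j _ => ?_
    rw [monomial_eval, biLap_iter_eval]
    simp [hq, hm0]
  -- compute the two differential expressions
  have hbil : biLap p = fun z => MvPolynomial.eval z (biLapP P) := by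
    rw [hpP, biLap_eval]
  have hpd : ∀ i, pd i p = fun z => MvPolynomial.eval z (MvPolynomial.pderiv i P) := by
    intro i; rw [hpP, pd_eval]
  -- abbreviation for evaluated iterates
  set a : ℕ → ℝ := fun j => MvPolynomial.eval y (q j) with ha
  have haM : a (M + 1) = 0 := by
    have h3 : k - 4 * M ≤ 3 := by omega
    have hz : q (M + 1) = 0 := by
      rw [hq1]
      exact biLapP_eq_zero (hqhom M) h3
    simp only [ha, hz, map_zero]
  have hbilP : MvPolynomial.eval y (biLapP P) =
      ∑ j ∈ Finset.range (M + 1), (1 / (Nat.factorial j : ℝ)) * a (j + 1) := by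
    rw [hP, biLapP_sum, map_sum]
    refine Finset.sum_congr rfl fun j _ => ?_
    rw [biLapP_C_mul, map_mul]
    congr 1
    · simp
    · rw [ha]
      exact (congrArg (MvPolynomial.eval y) (hq1 j)).symm
  have hgrad : (∑ i, y i * MvPolynomial.eval y (MvPolynomial.pderiv i P)) =
      ∑ j ∈ Finset.range (M + 1),
        (1 / (Nat.factorial j : ℝ)) * (((k - 4 * j : ℕ) : ℝ) * a j) := by
    have h1 : (∑ i, y i * MvPolynomial.eval y (MvPolynomial.pderiv i P)) =
        MvPolynomial.eval y (∑ i, MvPolynomial.X i * MvPolynomial.pderiv i P) := by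
      rw [map_sum]
      exact Finset.sum_congr rfl fun i _ => by rw [map_mul, MvPolynomial.eval_X]
    rw [h1]
    have h2 : (∑ i, MvPolynomial.X i * MvPolynomial.pderiv i P) =
        ∑ j ∈ Finset.range (M + 1),
          MvPolynomial.C (1 / (Nat.factorial j : ℝ)) * ((k - 4 * j) • q j) := by
      rw [hP]
      simp only [map_sum, Finset.mul_sum, MvPolynomial.pderiv_C_mul]
      rw [Finset.sum_comm]
      refine Finset.sum_congr rfl fun j _ => ?_
      rw [← euler (q j) (k - 4 * j) (hqhom j), Finset.mul_sum]
      refine Finset.sum_congr rfl fun i _ => by ring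
    rw [h2, map_sum]
    refine Finset.sum_congr rfl fun j _ => ?_
    rw [map_mul, MvPolynomial.eval_C]
    rw [map_nsmul, nsmul_eq_mul]
  have hPy : MvPolynomial.eval y P = ∑ j ∈ Finset.range (M + 1),
      (1 / (Nat.factorial j : ℝ)) * a j := by
    rw [hP, map_sum]
    refine Finset.sum_congr rfl fun j _ => ?_
    rw [map_mul, MvPolynomial.eval_C]
  simp only [hbil, hpd]
  simp only [hpP]
  rw [hbilP, hgrad, hPy, sum_shift M a haM]
  rw [Finset.mul_sum, Finset.mul_sum, ← Finset.sum_neg_distrib, ← Finset.sum_sub_distrib]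
  refine Finset.sum_congr rfl fun j hj => ?_
  have h4j : 4 * j ≤ k := by
    have hjM : j < M + 1 := Finset.mem_range.mp hj
    omega
  have hfact : (Nat.factorial j : ℝ) ≠ 0 := Nat.cast_ne_zero.mpr (Nat.factorial_ne_zero j)
  rw [Nat.cast_sub h4j]
  push_cast
  field_simp
  ring
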